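/- For every positive integer r and every real x with −π ≤ x ≤ π, ∑_{n=1}^∞ (−1)^{n−1} cos(nx)/n^{2r} = ∑_{k=0}^{r−1} (−1)^k x^{2k} η(2r−2k)/(2k)! + (−1)^r x^{2r}/(2·(2r)!). -/

import Mathlib

open Real Polynomial Finset

lemma bern_refl (n : ℕ) : (Polynomial.bernoulli n).comp (1 - Polynomial.X) =
    Polynomial.C ((-1:ℚ)^n) * Polynomial.bernoulli n := by
  induction n with
  | zero => simp
  | succ n ih =>
    have hd : derivative ((Polynomial.bernoulli (n+1)).comp (1 - Polynomial.X)
        - Polynomial.C ((-1:ℚ)^(n+1)) * Polynomial.bernoulli (n+1)) = 0 := by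
      rw [derivative_sub, derivative_comp, Polynomial.derivative_bernoulli_add_one,
        derivative_mul, derivative_C, zero_mul, zero_add,
        Polynomial.derivative_bernoulli_add_one]
      simp only [derivative_sub, derivative_one, derivative_X, zero_sub, mul_comp,
        natCast_comp, add_comp, one_comp, ih]
      simp only [pow_succ, map_mul, map_neg, map_one]
      ring
    have hc := Polynomial.eq_C_of_derivative_eq_zero hd
    have he : ((Polynomial.bernoulli (n+1)).comp (1 - Polynomial.X)
        - Polynomial.C ((-1:ℚ)^(n+1)) * Polynomial.bernoulli (n+1)).eval 1 = 0 := by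
      have h1 : ((-1:ℚ))^(n+1) * (-1:ℚ)^(n+1) = 1 := by
        rw [← pow_add]; exact Even.neg_one_pow ⟨n+1, by ring⟩
      simp only [eval_sub, eval_comp, eval_one, eval_X, sub_self, eval_mul, eval_C,
        Polynomial.bernoulli_eval_zero, Polynomial.bernoulli_eval_one,
        bernoulli'_eq_bernoulli, ← mul_assoc, h1, one_mul, sub_self]
    have h0 : ((Polynomial.bernoulli (n+1)).comp (1 - Polynomial.X)
        - Polynomial.C ((-1:ℚ)^(n+1)) * Polynomial.bernoulli (n+1)) = 0 := by
      rw [hc] at he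
      simp only [eval_C] at he
      rw [hc, he, map_zero]
    exact sub_eq_zero.mp h0

lemma bern_half_odd {n : ℕ} (hn : Odd n) : (Polynomial.bernoulli n).eval (1/2 : ℚ) = 0 := by
  have h := congrArg (Polynomial.eval (1/2 : ℚ)) (bern_refl n)
  simp only [eval_comp, eval_sub, eval_one, eval_X, eval_mul, eval_C, hn.neg_one_pow] at h
  norm_num at h
  linarith

/-- Real Bernoulli polynomial. -/
noncomputable def Br (n : ℕ) : Polynomial ℝ := (Polynomial.bernoulli n).map (algebraMap ℚ ℝ)

/-- B_n(1/2) as a real number. -/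
noncomputable def bh (n : ℕ) : ℝ := ((Polynomial.eval (1/2 : ℚ) (Polynomial.bernoulli n) : ℚ) : ℝ)

lemma bh_zero : bh 0 = 1 := by simp [bh]

lemma bh_odd {n : ℕ} (hn : Odd n) : bh n = 0 := by rw [bh, bern_half_odd hn, Rat.cast_zero]

lemma Br_eval_half (n : ℕ) : (Br n).eval (1/2 : ℝ) = bh n := by
  have : (1/2 : ℝ) = algebraMap ℚ ℝ (1/2 : ℚ) := by norm_num
  rw [Br, this, Polynomial.eval_map, Polynomial.eval₂_at_apply]
  simp [bh]

lemma Br_add (n : ℕ) : (Br n).comp (Polynomial.C (1/2 : ℝ) + Polynomial.X) =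
    ∑ j ∈ Finset.range (n+1),
      Polynomial.C ((n.choose j : ℝ) * bh j) * Polynomial.X ^ (n - j) := by
  induction n with
  | zero => simp [Br, bh_zero]
  | succ n ih =>
    have hDB : derivative (Br (n+1)) = (n+1 : ℝ[X]) * Br n := by
      rw [Br, derivative_map, Polynomial.derivative_bernoulli_add_one, Polynomial.map_mul]
      simp [Polynomial.map_add, Polynomial.map_natCast, Polynomial.map_one, Br]
    have hd : derivative ((Br (n+1)).comp (Polynomial.C (1/2 : ℝ) + Polynomial.X)
        - ∑ j ∈ Finset.range (n+2),
          Polynomial.C (((n+1).choose j : ℝ) * bh j) * Polynomial.X ^ (n+1 - j)) = 0 := by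
      rw [derivative_sub, sub_eq_zero, derivative_comp, hDB, derivative_sum]
      have hder : ∀ j, derivative (Polynomial.C (((n+1).choose j : ℝ) * bh j)
            * Polynomial.X ^ (n+1 - j))
          = Polynomial.C (((n+1).choose j : ℝ) * bh j * ((n+1-j : ℕ) : ℝ))
            * Polynomial.X ^ (n - j) := by
        intro j
        rw [derivative_C_mul, derivative_X_pow]
        have hexp : n + 1 - j - 1 = n - j := by omega
        rw [hexp, ← mul_assoc, ← Polynomial.C_mul, mul_comm (((n+1).choose j : ℝ) * bh j)]
      simp only [hder, derivative_add, derivative_C, derivative_X, zero_add, one_mul,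
        mul_comp, add_comp, natCast_comp, one_comp, ih, Finset.mul_sum]
      rw [Finset.sum_range_succ (f := fun j =>
        Polynomial.C (((n+1).choose j : ℝ) * bh j * ((n+1-j : ℕ) : ℝ)) * Polynomial.X ^ (n - j))]
      rw [Nat.sub_self, Nat.cast_zero, mul_zero, Polynomial.C_0, zero_mul, add_zero]
      refine Finset.sum_congr rfl fun j hj => ?_
      have hj' : j ≤ n := by simpa [Nat.lt_succ_iff] using hj
      have hcast : ((n:ℝ[X]) + 1) = Polynomial.C (((n:ℝ)) + 1) := by simp
      rw [hcast, ← mul_assoc, ← Polynomial.C_mul]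
      congr 1
      have hch := congrArg (Nat.cast : ℕ → ℝ) (Nat.choose_mul_succ_eq n j)
      push_cast [Nat.cast_sub (by omega : j ≤ n + 1)] at hch
      congr 1
      push_cast [Nat.cast_sub (by omega : j ≤ n + 1)]
      linear_combination bh j * hch
    have hc := Polynomial.eq_C_of_derivative_eq_zero hd
    have he : ((Br (n+1)).comp (Polynomial.C (1/2 : ℝ) + Polynomial.X)
        - ∑ j ∈ Finset.range (n+2),
          Polynomial.C (((n+1).choose j : ℝ) * bh j) * Polynomial.X ^ (n+1 - j)).eval 0 = 0 := by
      rw [eval_sub, eval_comp, eval_finset_sum]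
      simp only [eval_add, eval_C, eval_X, add_zero, eval_mul, eval_pow]
      rw [Br_eval_half, Finset.sum_range_succ, Nat.sub_self, pow_zero, Nat.choose_self,
        Nat.cast_one, one_mul, mul_one, Finset.sum_eq_zero, zero_add, sub_self]
      intro j hj
      rw [zero_pow (by simp at hj; omega : n + 1 - j ≠ 0), mul_zero]
    have h0 : (Br (n+1)).comp (Polynomial.C (1/2 : ℝ) + Polynomial.X)
        - ∑ j ∈ Finset.range (n+2),
          Polynomial.C (((n+1).choose j : ℝ) * bh j) * Polynomial.X ^ (n+1 - j) = 0 := by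
      rw [hc] at he
      simp only [eval_C] at he
      rw [hc, he, map_zero]
    exact sub_eq_zero.mp h0

lemma Br_eval_add (n : ℕ) (b : ℝ) : (Br n).eval (1/2 + b) =
    ∑ j ∈ Finset.range (n+1), (n.choose j : ℝ) * bh j * b^(n-j) := by
  have h := congrArg (Polynomial.eval b) (Br_add n)
  simpa [eval_comp, eval_finset_sum] using h

lemma cos_hasSum (k : ℕ) (hk : k ≠ 0) (x : ℝ) (hx0 : -π ≤ x) (hx : x ≤ π) :
    HasSum (fun n : ℕ => (-1:ℝ)^n * Real.cos ((n+1:ℝ)*x) / (n+1:ℝ)^(2*k))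
      ((-1:ℝ)^k * (2*π)^(2*k) / (2 * (Nat.factorial (2*k))) * (Br (2*k)).eval ((x+π)/(2*π))) := by
  have hπ := Real.pi_pos
  set t : ℝ := (x+π)/(2*π) with ht
  have ht0 : 0 ≤ t := div_nonneg (by linarith) (by linarith)
  have ht1 : t ≤ 1 := by rw [div_le_one (by linarith)]; linarith
  have H := hasSum_one_div_nat_pow_mul_cos hk (Set.mem_Icc.mpr ⟨ht0, ht1⟩)
  have H1 := (hasSum_nat_add_iff' (f := fun n : ℕ => 1 / (n:ℝ)^(2*k) * Real.cos (2*π*n*t)) 1).mpr H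
  simp only [Finset.range_one, Finset.sum_singleton, Nat.cast_zero, Nat.cast_add,
    Nat.cast_one, zero_pow (by omega : 2*k ≠ 0), div_zero, zero_mul, sub_zero, mul_zero,
    Real.cos_zero, mul_one] at H1
  have hfun : ∀ n : ℕ, -(1/((n:ℝ)+1)^(2*k) * Real.cos (2*π*((n:ℝ)+1)*t)) =
      (-1:ℝ)^n * Real.cos (((n:ℝ)+1)*x) / ((n:ℝ)+1)^(2*k) := by
    intro n
    have harg : 2*π*((n:ℝ)+1)*t = ((n:ℝ)+1)*x + ((n:ℝ)+1)*π := by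
      rw [ht]; field_simp
    have hc : Real.cos (((n:ℝ)+1)*π) = (-1:ℝ)^(n+1) := by
      have := Real.cos_nat_mul_pi_sub 0 (n+1)
      push_cast at this
      simpa using this
    have hs : Real.sin (((n:ℝ)+1)*π) = 0 := by
      have := Real.sin_nat_mul_pi (n+1); push_cast at this; exact this
    rw [harg, Real.cos_add, hc, hs, pow_succ]
    ring
  have H2 := H1.neg
  rw [show -((-1:ℝ)^(k+1) * (2*π)^(2*k) / 2 / (Nat.factorial (2*k)) *
      (Polynomial.map (algebraMap ℚ ℝ) (Polynomial.bernoulli (2*k))).eval t)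
    = (-1:ℝ)^k * (2*π)^(2*k) / (2 * (Nat.factorial (2*k))) * (Br (2*k)).eval t from by
      rw [Br, pow_succ]; ring] at H2
  have H3 : (fun n : ℕ => -(1/((n:ℝ)+1)^(2*k) * Real.cos (2*π*((n:ℝ)+1)*t))) =
      (fun n : ℕ => (-1:ℝ)^n * Real.cos (((n:ℝ)+1)*x) / ((n:ℝ)+1)^(2*k)) := funext hfun
  exact H3 ▸ H2

/-- The Dirichlet eta function at natural arguments, as a real series. -/
noncomputable def etaR (s : ℕ) : ℝ := ∑' n : ℕ, (-1 : ℝ) ^ n / (n + 1 : ℝ) ^ s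

lemma etaR_eq (k : ℕ) (hk : k ≠ 0) :
    etaR (2*k) = (-1:ℝ)^k * (2*π)^(2*k) / (2 * (Nat.factorial (2*k))) * bh (2*k) := by
  have hπ := Real.pi_pos
  have H := cos_hasSum k hk 0 (by linarith) (by linarith)
  have h2 : (0+π)/(2*π) = (1/2 : ℝ) := by
    rw [zero_add]; field_simp
  rw [h2, Br_eval_half] at H
  simp only [mul_zero, Real.cos_zero, mul_one] at H
  rw [etaR]
  exact H.tsum_eq

lemma sum_range_even_odd (f : ℕ → ℝ) (r : ℕ) :
    ∑ j ∈ Finset.range (2*r+1), f j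
      = ∑ m ∈ Finset.range (r+1), f (2*m) + ∑ m ∈ Finset.range r, f (2*m+1) := by
  induction r with
  | zero => simp
  | succ r ih =>
    have h1 : 2*(r+1)+1 = (2*r+1)+1+1 := by omega
    rw [h1, Finset.sum_range_succ, Finset.sum_range_succ, ih,
      Finset.sum_range_succ (fun m => f (2*m)), Finset.sum_range_succ (fun m => f (2*m+1))]
    rw [show 2*r+1+1 = 2*(r+1) from by omega,
      Finset.sum_range_succ (fun m => f (2*m)) (r+1),
      Finset.sum_range_succ (fun m => f (2*m)) r]
    ring

theorem stmt_8 (r : ℕ) (hr : 0 < r) (x : ℝ) (hx0 : -π ≤ x) (hx : x ≤ π) :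
    HasSum (fun n : ℕ => (-1 : ℝ) ^ n * Real.cos ((n + 1 : ℝ) * x) / (n + 1 : ℝ) ^ (2 * r))
      ((∑ k ∈ Finset.range r,
          (-1 : ℝ) ^ k * x ^ (2 * k) * etaR (2 * r - 2 * k) / (Nat.factorial (2 * k)))
        + (-1 : ℝ) ^ r * x ^ (2 * r) / (2 * (Nat.factorial (2 * r)))) := by
  have hπ := Real.pi_pos
  have H := cos_hasSum r (by omega) x hx0 hx
  convert H using 1
  rw [show (x+π)/(2*π) = 1/2 + x/(2*π) from by field_simp; ring]
  rw [Br_eval_add (2*r) (x/(2*π))]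
  set b : ℝ := x/(2*π) with hb
  set c : ℝ := (-1:ℝ)^r * (2*π)^(2*r) / (2 * (Nat.factorial (2*r))) with hc
  rw [sum_range_even_odd (fun j => ((2*r).choose j : ℝ) * bh j * b^(2*r-j)) r]
  have hodd : ∑ m ∈ Finset.range r,
      ((2*r).choose (2*m+1) : ℝ) * bh (2*m+1) * b^(2*r-(2*m+1)) = 0 :=
    Finset.sum_eq_zero fun m _ => by rw [bh_odd ⟨m, by omega⟩, mul_zero, zero_mul]
  rw [hodd, add_zero,
    ← Finset.sum_range_reflect (fun m => ((2*r).choose (2*m) : ℝ) * bh (2*m) * b^(2*r-2*m)) (r+1)]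
  simp only [Nat.add_sub_cancel]
  rw [Finset.sum_range_succ, Nat.sub_self, mul_add, Finset.mul_sum]
  congr 1
  · refine Finset.sum_congr rfl fun k hk => ?_
    have hkr : k < r := Finset.mem_range.mp hk
    rw [show 2*r - 2*k = 2*(r-k) from by omega, etaR_eq (r-k) (by omega)]
    have hch : ((2*r).choose (2*(r-k)) : ℝ) = ((2*r).choose (2*k) : ℝ) := by
      norm_cast
      rw [show 2*(r-k) = 2*r - 2*k from by omega]
      exact Nat.choose_symm (by omega)
    have hfact : ((2*r).choose (2*k) : ℝ) * (Nat.factorial (2*k)) * (Nat.factorial (2*r - 2*k))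
        = (Nat.factorial (2*r)) := by
      exact_mod_cast congrArg (Nat.cast : ℕ → ℝ)
        (Nat.choose_mul_factorial_mul_factorial (by omega : 2*k ≤ 2*r))
    have hsign : ((-1:ℝ))^k * (-1:ℝ)^(r-k) = (-1:ℝ)^r := by
      rw [← pow_add]; congr 1; omega
    have hpow : ((2*π):ℝ)^(2*(r-k)) * (2*π)^(2*k) = (2*π)^(2*r) := by
      rw [← pow_add]; congr 1; omega
    rw [hc, hb, hch, show 2*r - 2*(r-k) = 2*k from by omega,
      show Nat.factorial (2*(r-k)) = Nat.factorial (2*r-2*k) from by congr 1; omega]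
    have hf1 : (Nat.factorial (2*k) : ℝ) ≠ 0 := by positivity
    have hf2 : (Nat.factorial (2*r-2*k) : ℝ) ≠ 0 := by positivity
    have hf3 : (Nat.factorial (2*r) : ℝ) ≠ 0 := by positivity
    have hπn : ((2*π):ℝ) ≠ 0 := by positivity
    rw [div_pow]
    have hsp : ((-1:ℝ))^k * (-1:ℝ)^(r-k) * ((2*π)^(2*(r-k)) * (2*π)^(2*k))
        = (-1:ℝ)^r * (2*π)^(2*r) := by rw [hsign, hpow]
    field_simp
    linear_combination (x^(2*k) * bh (2*(r-k)) * ((Nat.factorial (2*r) : ℝ))) * hsp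
      - (x^(2*k) * bh (2*(r-k)) * (-1:ℝ)^r * (2*π)^(2*r)) * hfact
  · simp only [Nat.mul_zero, Nat.choose_zero_right, Nat.cast_one, bh_zero,
      Nat.sub_zero, one_mul, mul_one]
    rw [hc, hb, div_pow]
    have hq : ((2*π):ℝ)^(2*r) ≠ 0 := by positivity
    field_simp
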